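/- Let (A,B) ∈ ℂ^{n×n} be a proper Hessenberg pair with finite poles ξ_1,…,ξ_{n−1}, none of which is an eigenvalue of the pencil. Then the rational Krylov matrix K_k^rat(A, B, e_1, (ξ_1,…,ξ_{k−1}), P_k) = [e_1, M(ϱ_1,ξ_1)e_1, …, ∏_{i=1}^{k−1} M(ϱ_i,ξ_i)e_1] is upper triangular with nonzero diagonal entries, for any choice of shifts ϱ_i different from all the poles and eigenvalues. -/

import Mathlib

open Matrix

/-- A matrix is upper Hessenberg if all entries below the first subdiagonal vanish. -/
def UpperHessenberg {n : ℕ} (A : Matrix (Fin n) (Fin n) ℂ) : Prop :=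
  ∀ i j : Fin n, (j : ℕ) + 1 < (i : ℕ) → A i j = 0

/-- A proper Hessenberg pair: both matrices upper Hessenberg, no subdiagonal position with
both entries zero, linearly independent first columns and linearly independent last rows. -/
def ProperHessPair {n : ℕ} (A B : Matrix (Fin (n + 1)) (Fin (n + 1)) ℂ) : Prop :=
  UpperHessenberg A ∧ UpperHessenberg B ∧
    (∀ i j : Fin (n + 1), (i : ℕ) = (j : ℕ) + 1 → ¬(A i j = 0 ∧ B i j = 0)) ∧
    LinearIndependent ℂ ![fun i => A i 0, fun i => B i 0] ∧
    LinearIndependent ℂ ![fun j => A (Fin.last n) j, fun j => B (Fin.last n) j]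

/-- The elementary rational function M(ϱ,ξ) = (A − ϱB)(A − ξB)⁻¹. -/
noncomputable def Mfun {n : ℕ} (A B : Matrix (Fin n) (Fin n) ℂ) (ϱ ξ : ℂ) :
    Matrix (Fin n) (Fin n) ℂ :=
  (A - ϱ • B) * (A - ξ • B)⁻¹

/-- The ordered product ∏_{i=1}^{j} M(ϱᵢ, ξᵢ) of elementary rational functions. -/
noncomputable def prodM {n : ℕ} (A B : Matrix (Fin n) (Fin n) ℂ) (ϱ ξ : ℕ → ℂ)
    (j : ℕ) : Matrix (Fin n) (Fin n) ℂ :=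
  ((List.range j).map fun i => Mfun A B (ϱ i) (ξ i)).prod

/-- The submodule of vectors supported on indices `< m`. -/
noncomputable def Esub (N m : ℕ) : Submodule ℂ (Fin N → ℂ) where
  carrier := {v | ∀ i : Fin N, m ≤ (i : ℕ) → v i = 0}
  add_mem' := by intro a b ha hb i hi; simp [ha i hi, hb i hi]
  zero_mem' := by intro i _; rfl
  smul_mem' := by intro c a ha i hi; simp [ha i hi]

lemma hess_sub_smul {N : ℕ} {A B : Matrix (Fin N) (Fin N) ℂ}
    (hA : UpperHessenberg A) (hB : UpperHessenberg B) (c : ℂ) :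
    UpperHessenberg (A - c • B) := by
  intro i j hij
  simp [Matrix.sub_apply, hA i j hij, hB i j hij]

/-- Hessenberg matrices map E_m into E_{m+1}. -/
lemma hess_mulVec_mem {N m : ℕ} {H : Matrix (Fin N) (Fin N) ℂ}
    (hH : UpperHessenberg H) {v : Fin N → ℂ} (hv : v ∈ Esub N m) :
    H.mulVec v ∈ Esub N (m + 1) := by
  intro i hi
  show ∑ c, H i c * v c = 0
  refine Finset.sum_eq_zero fun c _ => ?_
  by_cases hc : m ≤ (c : ℕ)
  · rw [hv c hc, mul_zero]
  · rw [hH i c (by omega), zero_mul]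

/-- Hessenberg matrices with a zero leak entry at (m+1, m) map E_{m+1} into E_{m+1}. -/
lemma hess_mulVec_mem' {N m : ℕ} {H : Matrix (Fin N) (Fin N) ℂ}
    (hH : UpperHessenberg H)
    (hleak : ∀ i c : Fin N, (i : ℕ) = m + 1 → (c : ℕ) = m → H i c = 0)
    {v : Fin N → ℂ} (hv : v ∈ Esub N (m + 1)) :
    H.mulVec v ∈ Esub N (m + 1) := by
  intro i hi
  show ∑ c, H i c * v c = 0
  refine Finset.sum_eq_zero fun c _ => ?_
  by_cases hc : m + 1 ≤ (c : ℕ)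
  · rw [hv c hc, mul_zero]
  · by_cases hc2 : (c : ℕ) + 1 < (i : ℕ)
    · rw [hH i c hc2, zero_mul]
    · have hceq : (c : ℕ) = m := by omega
      have hieq : (i : ℕ) = m + 1 := by omega
      rw [hleak i c hieq hceq, zero_mul]

lemma inv_mulVec_mem {N m : ℕ} {H : Matrix (Fin N) (Fin N) ℂ}
    (hunit : IsUnit H) (hH : UpperHessenberg H)
    (hleak : ∀ i c : Fin N, (i : ℕ) = m + 1 → (c : ℕ) = m → H i c = 0)
    {v : Fin N → ℂ} (hv : v ∈ Esub N (m + 1)) :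
    H⁻¹.mulVec v ∈ Esub N (m + 1) := by
  have hdet := (Matrix.isUnit_iff_isUnit_det _).mp hunit
  have hfi : Function.Injective H.mulVecLin := by
    intro x y hxy
    have := congrArg (H⁻¹.mulVec) hxy
    simpa [Matrix.mulVecLin_apply, mulVec_mulVec,
      Matrix.nonsing_inv_mul _ hdet, one_mulVec] using this
  have hmap : ∀ x ∈ Esub N (m + 1), H.mulVecLin x ∈ Esub N (m + 1) := by
    intro x hx
    simpa [Matrix.mulVecLin_apply] using hess_mulVec_mem' hH hleak hx
  set g := H.mulVecLin.restrict hmap with hg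
  have hgi : Function.Injective g := by
    intro x y hxy
    exact Subtype.ext (hfi (congrArg Subtype.val hxy))
  have hgs : Function.Surjective g := (LinearMap.injective_iff_surjective).mp hgi
  obtain ⟨⟨w, hw⟩, hgw⟩ := hgs ⟨v, hv⟩
  have hHw : H.mulVec w = v := by
    have := congrArg Subtype.val hgw
    simpa [hg, LinearMap.restrict_apply, Matrix.mulVecLin_apply] using this
  have : H⁻¹.mulVec v = w := by
    rw [← hHw, mulVec_mulVec, Matrix.nonsing_inv_mul _ hdet, one_mulVec]
  rw [this]; exact hw

/-- Resolvent commutation: R s * B * R t = R t * B * R s. -/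
lemma resolvent_comm {N : ℕ} (A B : Matrix (Fin N) (Fin N) ℂ) (x y : ℂ)
    (hx : IsUnit (A - x • B)) (hy : IsUnit (A - y • B)) :
    (A - x • B)⁻¹ * B * (A - y • B)⁻¹ = (A - y • B)⁻¹ * B * (A - x • B)⁻¹ := by
  by_cases hxy : x = y
  · subst hxy; rfl
  · set Sx := A - x • B with hSx
    set Sy := A - y • B with hSy
    have hxd := (Matrix.isUnit_iff_isUnit_det _).mp hx
    have hyd := (Matrix.isUnit_iff_isUnit_det _).mp hy
    have hB : B = (x - y)⁻¹ • (Sy - Sx) := by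
      rw [hSx, hSy, sub_sub_sub_cancel_left, ← sub_smul, smul_smul,
        inv_mul_cancel₀ (sub_ne_zero.mpr hxy), one_smul]
    rw [hB]
    simp only [Matrix.smul_mul, Matrix.mul_smul, Matrix.sub_mul, Matrix.mul_sub]
    rw [Matrix.nonsing_inv_mul _ hyd, Matrix.nonsing_inv_mul _ hxd,
      Matrix.mul_nonsing_inv_cancel_right _ _ hyd,
      Matrix.mul_nonsing_inv_cancel_right _ _ hxd]
    simp [Matrix.one_mul]

lemma Mfun_form {N : ℕ} (A B : Matrix (Fin N) (Fin N) ℂ) (ϱ ξ : ℂ)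
    (hξ : IsUnit (A - ξ • B)) :
    Mfun A B ϱ ξ = 1 + (ξ - ϱ) • (B * (A - ξ • B)⁻¹) := by
  have hd := (Matrix.isUnit_iff_isUnit_det _).mp hξ
  have h1 : A - ϱ • B = (A - ξ • B) + (ξ - ϱ) • B := by
    rw [sub_smul]; abel
  rw [Mfun, h1, Matrix.add_mul, Matrix.mul_nonsing_inv _ hd, Matrix.smul_mul]

lemma Mfun_commute {N : ℕ} (A B : Matrix (Fin N) (Fin N) ℂ) (ϱ₁ ξ₁ ϱ₂ ξ₂ : ℂ)
    (h1 : IsUnit (A - ξ₁ • B)) (h2 : IsUnit (A - ξ₂ • B)) :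
    Commute (Mfun A B ϱ₁ ξ₁) (Mfun A B ϱ₂ ξ₂) := by
  have key : (B * (A - ξ₁ • B)⁻¹) * (B * (A - ξ₂ • B)⁻¹)
      = (B * (A - ξ₂ • B)⁻¹) * (B * (A - ξ₁ • B)⁻¹) := by
    have h := resolvent_comm A B ξ₁ ξ₂ h1 h2
    simp only [Matrix.mul_assoc] at h ⊢
    rw [h]
  rw [Commute, SemiconjBy, Mfun_form A B ϱ₁ ξ₁ h1, Mfun_form A B ϱ₂ ξ₂ h2]
  simp only [Matrix.add_mul, Matrix.mul_add, Matrix.one_mul, Matrix.mul_one,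
    Matrix.smul_mul, Matrix.mul_smul, key]
  module

lemma prodM_succ {N : ℕ} (A B : Matrix (Fin N) (Fin N) ℂ) (ϱ ξ : ℕ → ℂ) (t : ℕ) :
    prodM A B ϱ ξ (t + 1) = prodM A B ϱ ξ t * Mfun A B (ϱ t) (ξ t) := by
  rw [prodM, List.range_succ, List.map_append, List.prod_append]
  simp [prodM]

lemma prodM_succ_comm {N n : ℕ} (A B : Matrix (Fin N) (Fin N) ℂ) (ϱ ξ : ℕ → ℂ)
    (heig : ∀ i, i < n → IsUnit (A - ξ i • B)) (t : ℕ) (ht : t < n) :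
    prodM A B ϱ ξ (t + 1) = Mfun A B (ϱ t) (ξ t) * prodM A B ϱ ξ t := by
  have hc : Commute (Mfun A B (ϱ t) (ξ t)) (prodM A B ϱ ξ t) := by
    apply Commute.list_prod_right
    intro x hx
    simp only [List.mem_map, List.mem_range] at hx
    obtain ⟨i, hi, rfl⟩ := hx
    exact Mfun_commute A B _ _ _ _ (heig t ht) (heig i (lt_trans hi ht))
  rw [prodM_succ, hc.eq]

lemma mem_Esub {N m : ℕ} {v : Fin N → ℂ} :
    v ∈ Esub N m ↔ ∀ i : Fin N, m ≤ (i : ℕ) → v i = 0 := Iff.rfl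

noncomputable def Vv {n : ℕ} (A B : Matrix (Fin (n+1)) (Fin (n+1)) ℂ) (ϱ ξ : ℕ → ℂ)
    (t : ℕ) : Fin (n+1) → ℂ :=
  (prodM A B ϱ ξ t).mulVec (Pi.single 0 1)

noncomputable def Wv {n : ℕ} (A B : Matrix (Fin (n+1)) (Fin (n+1)) ℂ) (ϱ ξ : ℕ → ℂ)
    (t : ℕ) : Fin (n+1) → ℂ :=
  ((A - ξ t • B)⁻¹).mulVec (Vv A B ϱ ξ t)

section Main
variable {n : ℕ} (A B : Matrix (Fin (n+1)) (Fin (n+1)) ℂ) (ϱ ξ : ℕ → ℂ)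

lemma Vv_zero : Vv A B ϱ ξ 0 = Pi.single 0 1 := by
  have h : prodM A B ϱ ξ 0 = 1 := by simp [prodM]
  rw [Vv, h, one_mulVec]

lemma hVW (heig : ∀ i, i < n → IsUnit (A - ξ i • B)) (t : ℕ) (ht : t < n) :
    (A - ξ t • B).mulVec (Wv A B ϱ ξ t) = Vv A B ϱ ξ t := by
  rw [Wv, mulVec_mulVec,
    Matrix.mul_nonsing_inv _ ((Matrix.isUnit_iff_isUnit_det _).mp (heig t ht)),
    one_mulVec]

lemma hV1 (heig : ∀ i, i < n → IsUnit (A - ξ i • B)) (t : ℕ) (ht : t < n) :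
    Vv A B ϱ ξ (t+1) = (A - ϱ t • B).mulVec (Wv A B ϱ ξ t) := by
  rw [Vv, prodM_succ_comm A B ϱ ξ heig t ht, Mfun, Matrix.mul_assoc,
    ← mulVec_mulVec, ← mulVec_mulVec]
  rfl

lemma hBW (heig : ∀ i, i < n → IsUnit (A - ξ i • B))
    (hd : ∀ i, i < n → ξ i - ϱ i ≠ 0) (t : ℕ) (ht : t < n) :
    B.mulVec (Wv A B ϱ ξ t) = (ξ t - ϱ t)⁻¹ • (Vv A B ϱ ξ (t+1) - Vv A B ϱ ξ t) := by
  have h1 : Vv A B ϱ ξ (t+1) - Vv A B ϱ ξ t = (ξ t - ϱ t) • B.mulVec (Wv A B ϱ ξ t) := by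
    rw [hV1 A B ϱ ξ heig t ht, ← hVW A B ϱ ξ heig t ht, ← Matrix.sub_mulVec]
    have h2 : (A - ϱ t • B) - (A - ξ t • B) = (ξ t - ϱ t) • B := by
      rw [sub_smul]; abel
    rw [h2, smul_mulVec]
  rw [h1, smul_smul, inv_mul_cancel₀ (hd t ht), one_smul]

lemma main_induction
    (hA : UpperHessenberg A) (hB : UpperHessenberg B)
    (hpoles : ∀ i : Fin n, B i.succ i.castSucc ≠ 0 ∧
      A i.succ i.castSucc = ξ (i : ℕ) * B i.succ i.castSucc)
    (heig : ∀ i, i < n → IsUnit (A - ξ i • B))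
    (hshift : ∀ i j, i < n → j < n → ϱ i ≠ ξ j) :
    ∀ j, j ≤ n →
      (∀ t, t ≤ j → Vv A B ϱ ξ t ∈ Esub (n+1) (t+1) ∧
        ∀ i : Fin (n+1), (i : ℕ) = t → Vv A B ϱ ξ t i ≠ 0) ∧
      (∀ t, t < j → Wv A B ϱ ξ t ∈ Esub (n+1) (t+1) ∧
        ∀ i : Fin (n+1), (i : ℕ) = t → Wv A B ϱ ξ t i ≠ 0) := by
  have hd : ∀ i, i < n → ξ i - ϱ i ≠ 0 := fun i hi =>
    sub_ne_zero.mpr (Ne.symm (hshift i i hi hi))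
  intro j
  induction j with
  | zero =>
    intro _
    refine ⟨fun t ht => ?_, fun t ht => absurd ht (Nat.not_lt_zero t)⟩
    interval_cases t
    rw [Vv_zero]
    constructor
    · intro i hi
      have : i ≠ 0 := by
        intro h; rw [h] at hi; simp at hi
      exact Pi.single_eq_of_ne this 1
    · intro i hi
      have : i = 0 := Fin.ext (by simpa using hi)
      rw [this]
      simp
  | succ j IH =>
    intro hj1
    have hjn : j < n := hj1
    obtain ⟨IHS, IHT⟩ := IH (le_of_lt hjn)
    -- the Hessenberg matrix A - ξ j • B and its leak
    have hHj : UpperHessenberg (A - ξ j • B) := hess_sub_smul hA hB _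
    have hleak : ∀ i c : Fin (n+1), (i : ℕ) = j + 1 → (c : ℕ) = j →
        (A - ξ j • B) i c = 0 := by
      intro i c hi hc
      have hiF : i = (⟨j, hjn⟩ : Fin n).succ := Fin.ext (by simpa using hi)
      have hcF : c = (⟨j, hjn⟩ : Fin n).castSucc := Fin.ext (by simpa using hc)
      rw [hiF, hcF, Matrix.sub_apply, Matrix.smul_apply, (hpoles ⟨j, hjn⟩).2,
        smul_eq_mul]
      ring
    -- W j ∈ E_{j+1}
    have hWjE : Wv A B ϱ ξ j ∈ Esub (n+1) (j+1) :=
      inv_mulVec_mem (heig j hjn) hHj hleak (IHS j le_rfl).1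
    -- W j has nonzero top entry
    have hWjnz : ∀ i : Fin (n+1), (i : ℕ) = j → Wv A B ϱ ξ j i ≠ 0 := by
      intro i0 hi0 hW0
      -- then W j ∈ E_j
      have hWE' : Wv A B ϱ ξ j ∈ Esub (n+1) j := by
        intro i hi
        rcases eq_or_lt_of_le hi with h | h
        · have : i = i0 := Fin.ext (by omega)
          rw [this]; exact hW0
        · exact hWjE i h
      -- downward elimination
      set P : ℕ → Prop := fun t => ∃ u : Fin (n+1) → ℂ, ∃ lam : ℂ, lam ≠ 0 ∧
        u ∈ Esub (n+1) t ∧ (A - ξ j • B).mulVec u = lam • Vv A B ϱ ξ t with hP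
      have hPj : P j := ⟨Wv A B ϱ ξ j, 1, one_ne_zero, hWE', by
        rw [hVW A B ϱ ξ heig j hjn, one_smul]⟩
      have hstep : ∀ t, t < j → P (t+1) → P t := by
        intro t ht hPt1
        obtain ⟨u, lam, hlam, hu, hequ⟩ := hPt1
        have htn : t < n := lt_trans ht hjn
        obtain ⟨hWtE, hWtnz⟩ := IHT t ht
        set it : Fin (n+1) := ⟨t, by omega⟩ with hit
        set it1 : Fin (n+1) := ⟨t+1, by omega⟩ with hit1
        have hitval : (it : ℕ) = t := rfl
        have hit1val : (it1 : ℕ) = t + 1 := rfl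
        have hWtit : Wv A B ϱ ξ t it ≠ 0 := hWtnz it rfl
        set μ : ℂ := u it / Wv A B ϱ ξ t it with hμ
        set u' : Fin (n+1) → ℂ := u - μ • Wv A B ϱ ξ t with hu'
        have hu'E : u' ∈ Esub (n+1) t := by
          intro i hi
          rcases eq_or_lt_of_le hi with h | h
          · have hieq : i = it := Fin.ext (by omega)
            rw [hu', hieq]
            simp only [Pi.sub_apply, Pi.smul_apply, smul_eq_mul, hμ]
            field_simp
            simp
          · have h1 : u i = 0 := hu i h
            have h2 : Wv A B ϱ ξ t i = 0 := hWtE i h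
            simp [hu', h1, h2]
        set g : ℂ := (ξ t - ξ j) * (ξ t - ϱ t)⁻¹ with hg
        have hM : (A - ξ j • B).mulVec (Wv A B ϱ ξ t) =
            Vv A B ϱ ξ t + g • (Vv A B ϱ ξ (t+1) - Vv A B ϱ ξ t) := by
          have h2 : A - ξ j • B = (A - ξ t • B) + (ξ t - ξ j) • B := by
            rw [sub_smul]; abel
          rw [h2, Matrix.add_mulVec, smul_mulVec, hVW A B ϱ ξ heig t htn,
            hBW A B ϱ ξ heig hd t htn, smul_smul, hg]
        have hkey : (A - ξ j • B).mulVec u' =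
            (lam - μ * g) • Vv A B ϱ ξ (t+1) + (μ * (g - 1)) • Vv A B ϱ ξ t := by
          rw [hu', mulVec_sub, mulVec_smul, hequ, hM]
          module
        -- evaluate at coordinate t+1
        have hLHS : (A - ξ j • B).mulVec u' it1 = 0 :=
          hess_mulVec_mem hHj hu'E it1 (by omega)
        have hVt1 : Vv A B ϱ ξ t it1 = 0 := (IHS t (by omega)).1 it1 (by omega)
        have hVt1nz : Vv A B ϱ ξ (t+1) it1 ≠ 0 := (IHS (t+1) (by omega)).2 it1 (by omega)
        have halpha : lam - μ * g = 0 := by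
          have := congrFun hkey it1
          rw [hLHS] at this
          simp only [Pi.add_apply, Pi.smul_apply, smul_eq_mul, hVt1, mul_zero,
            add_zero] at this
          rcases mul_eq_zero.mp this.symm with h | h
          · exact h
          · exact absurd h hVt1nz
        have hμnz : μ * g ≠ 0 := by
          intro h
          rw [h] at halpha
          simp at halpha
          exact hlam halpha
        have hg1 : g - 1 ≠ 0 := by
          intro h
          have hgeq : (ξ t - ξ j) * (ξ t - ϱ t)⁻¹ = 1 := by rw [← hg]; exact sub_eq_zero.mp h
          have h2 : ξ t - ξ j = ξ t - ϱ t := (mul_inv_eq_one₀ (hd t htn)).mp hgeq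
          have h3 : ξ j = ϱ t := sub_right_inj.mp h2
          exact hshift t j htn hjn h3.symm
        refine ⟨u', μ * (g - 1), mul_ne_zero (fun h => hμnz (by rw [h, zero_mul])) hg1,
          hu'E, ?_⟩
        rw [hkey, halpha, zero_smul, zero_add]
      have hdown : ∀ m, m ≤ j → P (j - m) := by
        intro m
        induction m with
        | zero => intro _; simpa using hPj
        | succ m ihm =>
          intro hm
          have h1 := ihm (by omega)
          have heq : j - m = (j - (m+1)) + 1 := by omega
          rw [heq] at h1
          exact hstep _ (by omega) h1
      have hP0 : P 0 := by simpa using hdown j le_rfl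
      obtain ⟨u, lam, hlam, hu, hequ⟩ := hP0
      have hu0 : u = 0 := funext fun i => hu i (Nat.zero_le _)
      rw [hu0, mulVec_zero] at hequ
      have := congrFun hequ 0
      rw [Vv_zero] at this
      simp at this
      exact hlam this.symm
    -- now establish S (j+1)
    have hV1j : Vv A B ϱ ξ (j+1) = (A - ϱ j • B).mulVec (Wv A B ϱ ξ j) :=
      hV1 A B ϱ ξ heig j hjn
    have hSj1mem : Vv A B ϱ ξ (j+1) ∈ Esub (n+1) (j+2) := by
      rw [hV1j]
      exact hess_mulVec_mem (hess_sub_smul hA hB _) hWjE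
    have hSj1nz : ∀ i : Fin (n+1), (i : ℕ) = j + 1 → Vv A B ϱ ξ (j+1) i ≠ 0 := by
      intro i hi
      set ij : Fin (n+1) := ⟨j, by omega⟩ with hij
      have hijval : (ij : ℕ) = j := rfl
      have hsum : Vv A B ϱ ξ (j+1) i = (A - ϱ j • B) i ij * Wv A B ϱ ξ j ij := by
        rw [hV1j]
        show ∑ c, (A - ϱ j • B) i c * Wv A B ϱ ξ j c = _
        refine Finset.sum_eq_single ij (fun c _ hc => ?_) (fun h => absurd (Finset.mem_univ ij) h)
        by_cases hcj : (c : ℕ) ≤ j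
        · have hclt : (c : ℕ) < j := by
            rcases lt_or_eq_of_le hcj with h | h
            · exact h
            · exact absurd (Fin.ext (by omega) : c = ij) hc
          rw [hess_sub_smul hA hB (ϱ j) i c (by omega), zero_mul]
        · rw [hWjE c (by omega), mul_zero]
      have hent : (A - ϱ j • B) i ij = (ξ j - ϱ j) * B i ij := by
        have hiF : i = (⟨j, hjn⟩ : Fin n).succ := Fin.ext (by simpa using hi)
        have hcF : ij = (⟨j, hjn⟩ : Fin n).castSucc := Fin.ext (by simp [hij])
        rw [hiF, hcF, Matrix.sub_apply, Matrix.smul_apply, (hpoles ⟨j, hjn⟩).2,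
          smul_eq_mul]
        ring
      have hBnz : B i ij ≠ 0 := by
        have hiF : i = (⟨j, hjn⟩ : Fin n).succ := Fin.ext (by simpa using hi)
        have hcF : ij = (⟨j, hjn⟩ : Fin n).castSucc := Fin.ext (by simp [hij])
        rw [hiF, hcF]
        exact (hpoles ⟨j, hjn⟩).1
      rw [hsum, hent]
      exact mul_ne_zero (mul_ne_zero (sub_ne_zero.mpr
        (Ne.symm (hshift j j hjn hjn))) hBnz) (hWjnz ij rfl)
    refine ⟨fun t ht => ?_, fun t ht => ?_⟩
    · rcases Nat.lt_or_ge t (j+1) with h | h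
      · exact IHS t (by omega)
      · have : t = j + 1 := by omega
        subst this
        exact ⟨hSj1mem, hSj1nz⟩
    · rcases Nat.lt_or_ge t j with h | h
      · exact IHT t h
      · have : t = j := by omega
        subst this
        exact ⟨hWjE, hWjnz⟩

end Main

/-- For a proper Hessenberg pair with finite poles, none of which is an eigenvalue, the
rational Krylov matrix [e₁, M(ϱ₁,ξ₁)e₁, …, ∏ M(ϱᵢ,ξᵢ)e₁] is upper triangular with nonzero
diagonal entries, for any shifts different from all poles and eigenvalues. -/
theorem rational_krylov_matrix_upper_triangular {n : ℕ}
    (A B : Matrix (Fin (n + 1)) (Fin (n + 1)) ℂ)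
    (h : ProperHessPair A B)
    (ξ : ℕ → ℂ)
    (hpoles : ∀ i : Fin n, B i.succ i.castSucc ≠ 0 ∧
      A i.succ i.castSucc = ξ (i : ℕ) * B i.succ i.castSucc)
    (heig : ∀ i, i < n → IsUnit (A - ξ i • B))
    (ϱ : ℕ → ℂ)
    (hshift : ∀ i j, i < n → j < n → ϱ i ≠ ξ j)
    (hshifteig : ∀ i, i < n → IsUnit (A - ϱ i • B))
    (k : ℕ) (hk : k ≤ n + 1) :
    ∀ j : Fin k,
      (∀ i : Fin (n + 1), (j : ℕ) < (i : ℕ) →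
        (prodM A B ϱ ξ (j : ℕ)).mulVec (Pi.single 0 1) i = 0) ∧
      (prodM A B ϱ ξ (j : ℕ)).mulVec (Pi.single 0 1) (Fin.castLE hk j) ≠ 0 := by
  intro j
  obtain ⟨hS, _⟩ := main_induction A B ϱ ξ h.1 h.2.1 hpoles heig hshift (j : ℕ)
    (by have := j.isLt; omega)
  obtain ⟨hmem, hnz⟩ := hS (j : ℕ) le_rfl
  constructor
  · intro i hi
    exact hmem i (by omega)
  · exact hnz (Fin.castLE hk j) (by simp)
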